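/- Let d₁ > d₂ with d₁, d₂ ∈ (0,2), and let Z₁, Z₂ be closed subsets of [0,1] such that: (a) for all rationals s < s' with Z₂ ∩ (s,s') ≠ ∅, dim_H((Z₁ ∪ Z₂) ∩ (s,s')) = 1 − d₂/2; (b) for all rationals s < s' with Z₂ ∩ (s,s') = ∅ and Z₁ ∩ (s,s') ≠ ∅, dim_H((Z₁ ∪ Z₂) ∩ (s,s')) = 1 − d₁/2 < 1 − d₂/2; and (c) Z₁ \ Z₂ is dense in Z₁. Then Z₂ = {t ∈ Z₁ ∪ Z₂ : ∀ rationals s < t < s', dim_H((Z₁ ∪ Z₂) ∩ (s,s')) = 1 − d₂/2} and Z₁ = closure((Z₁ ∪ Z₂) \ Z₂). In particular, the pair (Z₁, Z₂) can be recovered measurably from the union Z₁ ∪ Z₂. -/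
import Mathlib


open Set

/-- **Deterministic recovery lemma.** If `d₂ < d₁` (both in `(0,2)`) and the
closed sets `Z₁, Z₂ ⊆ [0,1]` satisfy the Hausdorff-dimension dichotomy
(a), (b) on rational intervals and the density condition (c), then `Z₂` and `Z₁`
can be recovered from the union `Z₁ ∪ Z₂`. -/
theorem recover_pair_from_union (d₁ d₂ : ℝ)
    (h₀ : 0 < d₂) (h₁ : d₂ < d₁) (h₂ : d₁ < 2)
    (Z₁ Z₂ : Set ℝ) (hc₁ : IsClosed Z₁) (hc₂ : IsClosed Z₂)
    (hs₁ : Z₁ ⊆ Set.Icc (0:ℝ) 1) (hs₂ : Z₂ ⊆ Set.Icc (0:ℝ) 1)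
    (ha : ∀ s s' : ℚ, (s:ℝ) < (s':ℝ) → (Z₂ ∩ Set.Ioo (s:ℝ) (s':ℝ)).Nonempty →
      dimH ((Z₁ ∪ Z₂) ∩ Set.Ioo (s:ℝ) (s':ℝ)) = ENNReal.ofReal (1 - d₂ / 2))
    (hb : ∀ s s' : ℚ, (s:ℝ) < (s':ℝ) → Z₂ ∩ Set.Ioo (s:ℝ) (s':ℝ) = ∅ →
      (Z₁ ∩ Set.Ioo (s:ℝ) (s':ℝ)).Nonempty →
      dimH ((Z₁ ∪ Z₂) ∩ Set.Ioo (s:ℝ) (s':ℝ)) = ENNReal.ofReal (1 - d₁ / 2))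
    (hcdense : Z₁ ⊆ closure (Z₁ \ Z₂)) :
    Z₂ = {t ∈ Z₁ ∪ Z₂ | ∀ s s' : ℚ, (s:ℝ) < t → t < (s':ℝ) →
        dimH ((Z₁ ∪ Z₂) ∩ Set.Ioo (s:ℝ) (s':ℝ)) = ENNReal.ofReal (1 - d₂ / 2)} ∧
      Z₁ = closure ((Z₁ ∪ Z₂) \ Z₂) := by
  have hZ : (Z₁ ∪ Z₂) \ Z₂ = Z₁ \ Z₂ := by ext x; simp only [mem_diff, mem_union]; tauto
  constructor
  · ext t
    constructor
    · intro ht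
      refine ⟨Or.inr ht, fun s s' hst hts' => ?_⟩
      exact ha s s' (hst.trans hts') ⟨t, ht, hst, hts'⟩
    · rintro ⟨htu, h⟩
      by_contra htZ₂
      have ht1 : t ∈ Z₁ := htu.resolve_right htZ₂
      obtain ⟨ε, hε, hball⟩ := Metric.isOpen_iff.mp hc₂.isOpen_compl t htZ₂
      obtain ⟨s, hs1, hs2⟩ := exists_rat_btwn (show t - ε < t by linarith)
      obtain ⟨s', hs'1, hs'2⟩ := exists_rat_btwn (show t < t + ε by linarith)
      have hdisj : Z₂ ∩ Set.Ioo (s:ℝ) (s':ℝ) = ∅ := by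
        ext x
        simp only [mem_inter_iff, mem_Ioo, mem_empty_iff_false, iff_false, not_and]
        intro hx hx1 hx2
        exact hball (by rw [Metric.mem_ball, Real.dist_eq, abs_lt]; constructor <;> linarith) hx
      have hne : (Z₁ ∩ Set.Ioo (s:ℝ) (s':ℝ)).Nonempty := ⟨t, ht1, hs2, hs'1⟩
      have hd := hb s s' (hs2.trans hs'1) hdisj hne
      have heq := h s s' hs2 hs'1
      rw [hd] at heq
      have hlt : ENNReal.ofReal (1 - d₁/2) < ENNReal.ofReal (1 - d₂/2) :=
        (ENNReal.ofReal_lt_ofReal_iff (by linarith)).mpr (by linarith)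
      exact absurd heq hlt.ne
  · rw [hZ]
    exact Subset.antisymm hcdense (closure_minimal diff_subset hc₁)
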